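/- For every integer k ≥ 3, the generating functions for Primc-coloured partitions satisfy, in the ring of formal power series in q over ℤ[a,c,d]: (1 − c q^k) G_{k_d}(q;a,c,d) = ((1 − c q^{2k})/(1 − q^k)) G_{(k−1)_d}(q;a,c,d) + ((a q^k + d q^k + a d q^{2k})/(1 − q^{k−1})) G_{(k−2)_d}(q;a,c,d) + (a d q^{2k−1}/(1 − q^{k−2})) G_{(k−3)_d}(q;a,c,d), where division by 1 − q^j (j ≥ 1) denotes multiplication by its inverse in the formal power series ring, and with the convention G_{0_d} = 1. -/

import Mathlib

/-- The four colours of Primc's identity. -/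
inductive PrimcColor : Type
  | a | b | c | d
  deriving DecidableEq

open PrimcColor

/-- The difference matrix B: B(x,y) is the minimal difference between a part of colour x
and the following part of colour y. -/
def matB : PrimcColor → PrimcColor → ℕ
  | a, a => 2 | a, b => 1 | a, c => 2 | a, d => 2
  | b, a => 1 | b, b => 0 | b, c => 1 | b, d => 1
  | c, a => 0 | c, b => 1 | c, c => 0 | c, d => 2
  | d, a => 0 | d, b => 1 | d, c => 0 | d, d => 2

/-- A Primc-coloured partition: a finite sequence of coloured positive integers
satisfying the difference conditions of the matrix B. -/
def IsPrimcPartition (l : List (ℕ × PrimcColor)) : Prop :=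
  (∀ p ∈ l, 0 < p.1) ∧ l.Chain' (fun p q => q.1 + matB p.2 q.2 ≤ p.1)

/-- The rank of the coloured integer k_x in the total order
1_a < 1_b < 1_c < 1_d < 2_a < 2_b < 2_c < 2_d < ⋯. -/
def primcRank (k : ℕ) (x : PrimcColor) : ℕ :=
  4 * k + (match x with | a => 0 | b => 1 | c => 2 | d => 3)

/-- The coefficient ring ℤ[a,c,d]: a is the variable of index 0, c of index 1,
d of index 2. -/
abbrev PrimcRing : Type := MvPolynomial (Fin 3) ℤ

/-- The generating function G_{k_x}(q;a,c,d) for Primc-coloured partitions with largest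
part at most k_x, as a formal power series in q over ℤ[a,c,d]: the coefficient of q^n is
Σ A'(n;i,j,t) a^i c^j d^t where A'(n;i,j,t) is the number of Primc-coloured partitions
of n with i parts coloured a, j parts coloured c, t parts coloured d, all parts being at
most k_x (note G_{0_d} = 1 since no coloured positive integer is ≤ 0_d). -/
noncomputable def primcG (k : ℕ) (x : PrimcColor) : PowerSeries PrimcRing :=
  PowerSeries.mk fun n =>
    ∑ i ∈ Finset.range (n + 1), ∑ j ∈ Finset.range (n + 1), ∑ t ∈ Finset.range (n + 1),
      (Nat.card {lam : List (ℕ × PrimcColor) // IsPrimcPartition lam ∧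
          (∀ p ∈ lam, primcRank p.1 p.2 ≤ primcRank k x) ∧
          (lam.map Prod.fst).sum = n ∧
          lam.countP (fun p => decide (p.2 = a)) = i ∧
          lam.countP (fun p => decide (p.2 = c)) = j ∧
          lam.countP (fun p => decide (p.2 = d)) = t} : PrimcRing) *
        (MvPolynomial.X 0 ^ i * MvPolynomial.X 1 ^ j * MvPolynomial.X 2 ^ t)

/-- The generating function E_{k_x}(q;a,c,d) for Primc-coloured partitions whose largest
part is exactly k_x (the largest part being the first one, as the difference conditions
force the parts to be non-increasing in the order on coloured integers). -/
noncomputable def primcE (k : ℕ) (x : PrimcColor) : PowerSeries PrimcRing :=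
  PowerSeries.mk fun n =>
    ∑ i ∈ Finset.range (n + 1), ∑ j ∈ Finset.range (n + 1), ∑ t ∈ Finset.range (n + 1),
      (Nat.card {lam : List (ℕ × PrimcColor) // IsPrimcPartition lam ∧
          lam.head? = some (k, x) ∧
          (lam.map Prod.fst).sum = n ∧
          lam.countP (fun p => decide (p.2 = a)) = i ∧
          lam.countP (fun p => decide (p.2 = c)) = j ∧
          lam.countP (fun p => decide (p.2 = d)) = t} : PrimcRing) *
        (MvPolynomial.X 0 ^ i * MvPolynomial.X 1 ^ j * MvPolynomial.X 2 ^ t)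

namespace PrimcAux
open PrimcColor PowerSeries

/-- weight monomial of a list -/
noncomputable def wt (l : List (ℕ × PrimcColor)) : PrimcRing :=
  MvPolynomial.X 0 ^ l.countP (fun p => decide (p.2 = a)) *
  MvPolynomial.X 1 ^ l.countP (fun p => decide (p.2 = c)) *
  MvPolynomial.X 2 ^ l.countP (fun p => decide (p.2 = d))

/-- generic series counting Primc partitions satisfying an extra predicate Q -/
noncomputable def mySeries (Q : List (ℕ × PrimcColor) → Prop) : PowerSeries PrimcRing :=
  PowerSeries.mk fun n =>
    ∑ i ∈ Finset.range (n + 1), ∑ j ∈ Finset.range (n + 1), ∑ t ∈ Finset.range (n + 1),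
      (Nat.card {lam : List (ℕ × PrimcColor) // IsPrimcPartition lam ∧
          Q lam ∧
          (lam.map Prod.fst).sum = n ∧
          lam.countP (fun p => decide (p.2 = a)) = i ∧
          lam.countP (fun p => decide (p.2 = c)) = j ∧
          lam.countP (fun p => decide (p.2 = d)) = t} : PrimcRing) *
        (MvPolynomial.X 0 ^ i * MvPolynomial.X 1 ^ j * MvPolynomial.X 2 ^ t)

theorem primcG_eq (k : ℕ) (x : PrimcColor) :
    primcG k x = mySeries (fun l => ∀ p ∈ l, primcRank p.1 p.2 ≤ primcRank k x) := rfl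

theorem primcE_eq (k : ℕ) (x : PrimcColor) :
    primcE k x = mySeries (fun l => l.head? = some (k, x)) := rfl

end PrimcAux

namespace PrimcAux

instance : Fintype PrimcColor where
  elems := {PrimcColor.a, PrimcColor.b, PrimcColor.c, PrimcColor.d}
  complete := by intro x; cases x <;> simp

end PrimcAux

namespace PrimcAux

lemma length_le_sum {l : List (ℕ × PrimcColor)} (h : ∀ p ∈ l, 0 < p.1) :
    l.length ≤ (l.map Prod.fst).sum := by
  induction l with
  | nil => simp
  | cons p l ih =>
    simp only [List.map_cons, List.sum_cons, List.length_cons]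
    have h1 : 0 < p.1 := h p (by simp)
    have h2 := ih (fun q hq => h q (by simp [hq]))
    omega

lemma mem_le_sum {l : List (ℕ × PrimcColor)} {p : ℕ × PrimcColor} (hp : p ∈ l) :
    p.1 ≤ (l.map Prod.fst).sum :=
  List.single_le_sum (fun _ _ => Nat.zero_le _) _ (List.mem_map_of_mem hp)

lemma finite_setOf (Q : List (ℕ × PrimcColor) → Prop) (n : ℕ) :
    {l : List (ℕ × PrimcColor) | IsPrimcPartition l ∧ Q l ∧ (l.map Prod.fst).sum = n}.Finite := by
  have hfin : {l : List (Fin (n+1) × PrimcColor) | l.length ≤ n}.Finite :=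
    List.finite_length_le _ n
  apply Set.Finite.subset (hfin.image (fun l => l.map (fun p => (p.1.1, p.2))))
  rintro l ⟨⟨hpos, -⟩, -, hsum⟩
  refine ⟨l.map (fun p => (⟨min p.1 n, by omega⟩, p.2)), ?_, ?_⟩
  · simpa using (length_le_sum hpos).trans hsum.le
  · simp only [List.map_map]
    conv_rhs => rw [← List.map_id l]
    refine List.map_congr_left fun p hp => ?_
    have := mem_le_sum hp
    have : p.1 ≤ n := by omega
    simp [Function.comp, Nat.min_eq_left this]

end PrimcAux

namespace PrimcAux
open PrimcColor PowerSeries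

/-- abbreviations for the three counts -/
def cntA (l : List (ℕ × PrimcColor)) : ℕ := l.countP (fun p => decide (p.2 = a))
def cntC (l : List (ℕ × PrimcColor)) : ℕ := l.countP (fun p => decide (p.2 = c))
def cntD (l : List (ℕ × PrimcColor)) : ℕ := l.countP (fun p => decide (p.2 = d))

theorem coeff_mySeries (Q : List (ℕ × PrimcColor) → Prop) (n : ℕ) :
    PowerSeries.coeff n (mySeries Q) =
      ∑ l ∈ (finite_setOf Q n).toFinset, wt l := by
  classical
  set T := (finite_setOf Q n).toFinset with hT
  have hmem : ∀ l, l ∈ T ↔ IsPrimcPartition l ∧ Q l ∧ (l.map Prod.fst).sum = n := by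
    intro l; simp [hT, Set.Finite.mem_toFinset]
  have hmaps : ∀ l ∈ T, (cntA l, cntC l, cntD l) ∈
      Finset.range (n+1) ×ˢ (Finset.range (n+1) ×ˢ Finset.range (n+1)) := by
    intro l hl
    obtain ⟨⟨hpos, -⟩, -, hsum⟩ := (hmem l).1 hl
    have hlen : l.length ≤ n := (length_le_sum hpos).trans hsum.le
    have h1 : cntA l ≤ l.length := List.countP_le_length
    have h2 : cntC l ≤ l.length := List.countP_le_length
    have h3 : cntD l ≤ l.length := List.countP_le_length
    simp only [Finset.mem_product, Finset.mem_range]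
    omega
  rw [← Finset.sum_fiberwise_of_maps_to hmaps wt]
  rw [Finset.sum_product]
  simp only [Finset.sum_product]
  rw [mySeries, coeff_mk]
  refine Finset.sum_congr rfl fun i hi => Finset.sum_congr rfl fun j hj =>
    Finset.sum_congr rfl fun t ht => ?_
  have hset : {lam : List (ℕ × PrimcColor) | IsPrimcPartition lam ∧ Q lam ∧
      (lam.map Prod.fst).sum = n ∧
      lam.countP (fun p => decide (p.2 = a)) = i ∧
      lam.countP (fun p => decide (p.2 = c)) = j ∧
      lam.countP (fun p => decide (p.2 = d)) = t} =
      ↑(T.filter (fun l => (cntA l, cntC l, cntD l) = (i, j, t))) := by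
    ext l
    simp only [Set.mem_setOf_eq, Finset.coe_filter, hmem, cntA, cntC, cntD,
      Prod.mk.injEq, Set.mem_setOf_eq]
    tauto
  have hcard : (Nat.card {lam : List (ℕ × PrimcColor) // IsPrimcPartition lam ∧ Q lam ∧
      (lam.map Prod.fst).sum = n ∧
      lam.countP (fun p => decide (p.2 = a)) = i ∧
      lam.countP (fun p => decide (p.2 = c)) = j ∧
      lam.countP (fun p => decide (p.2 = d)) = t}) =
      (T.filter (fun l => (cntA l, cntC l, cntD l) = (i, j, t))).card := by
    rw [← Set.ncard_coe_finset, ← hset, ← Nat.card_coe_set_eq]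
    rfl
  rw [hcard]
  rw [Finset.sum_congr rfl (g := fun _ => MvPolynomial.X (R := ℤ) 0 ^ i *
      MvPolynomial.X 1 ^ j * MvPolynomial.X 2 ^ t)
    (fun l hl => by
      simp only [Finset.mem_filter, Prod.mk.injEq] at hl
      obtain ⟨-, h1, h2, h3⟩ := hl
      rw [wt, ← h1, ← h2, ← h3]; rfl)]
  rw [Finset.sum_const, nsmul_eq_mul]
end PrimcAux

namespace PrimcAux
open PrimcColor PowerSeries

lemma rank_step (p q : ℕ × PrimcColor) (h : q.1 + matB p.2 q.2 ≤ p.1) :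
    primcRank q.1 q.2 ≤ primcRank p.1 p.2 := by
  obtain ⟨v, y⟩ := p; obtain ⟨w, z⟩ := q
  cases y <;> cases z <;> simp_all [matB, primcRank] <;> omega

lemma pairwise_rank {l : List (ℕ × PrimcColor)} (hl : IsPrimcPartition l) :
    l.Pairwise (fun p q => primcRank q.1 q.2 ≤ primcRank p.1 p.2) := by
  haveI : IsTrans (ℕ × PrimcColor) (fun p q => primcRank q.1 q.2 ≤ primcRank p.1 p.2) :=
    ⟨fun _ _ _ h1 h2 => le_trans h2 h1⟩
  exact List.isChain_iff_pairwise.mp (hl.2.imp rank_step)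

lemma head_bound {l : List (ℕ × PrimcColor)} (hl : IsPrimcPartition l)
    {h : ℕ × PrimcColor} (hh : l.head? = some h) :
    ∀ p ∈ l, primcRank p.1 p.2 ≤ primcRank h.1 h.2 := by
  cases l with
  | nil => simp at hh
  | cons h0 t =>
    simp only [List.head?_cons, Option.some.injEq] at hh
    subst hh
    intro p hp
    rcases List.mem_cons.mp hp with rfl | hp
    · exact le_refl _
    · exact (List.pairwise_cons.mp (pairwise_rank hl)).1 p hp

lemma primcRank_inj {k k' : ℕ} {x x' : PrimcColor} (h : primcRank k x = primcRank k' x') :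
    k = k' ∧ x = x' := by
  cases x <;> cases x' <;> simp_all [primcRank] <;> omega

/-- generic additive splitting of mySeries -/
lemma mySeries_split {Q Q1 Q2 : List (ℕ × PrimcColor) → Prop}
    (hiff : ∀ l, IsPrimcPartition l → (Q l ↔ Q1 l ∨ Q2 l))
    (hdis : ∀ l, IsPrimcPartition l → Q1 l → Q2 l → False) :
    mySeries Q = mySeries Q1 + mySeries Q2 := by
  classical
  refine PowerSeries.ext fun n => ?_
  rw [map_add, coeff_mySeries, coeff_mySeries, coeff_mySeries]
  have hdisj : Disjoint (finite_setOf Q1 n).toFinset (finite_setOf Q2 n).toFinset := by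
    rw [Finset.disjoint_left]
    intro l h1 h2
    rw [Set.Finite.mem_toFinset] at h1 h2
    exact hdis l h1.1 h1.2.1 h2.2.1
  rw [← Finset.sum_union hdisj]
  apply Finset.sum_congr _ (fun _ _ => rfl)
  ext l
  simp only [Set.Finite.mem_toFinset, Finset.mem_union, Set.mem_setOf_eq]
  constructor
  · rintro ⟨hP, hQ, hs⟩
    rcases (hiff l hP).mp hQ with h | h
    · exact Or.inl ⟨hP, h, hs⟩
    · exact Or.inr ⟨hP, h, hs⟩
  · rintro (⟨hP, h, hs⟩ | ⟨hP, h, hs⟩)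
    · exact ⟨hP, (hiff l hP).mpr (Or.inl h), hs⟩
    · exact ⟨hP, (hiff l hP).mpr (Or.inr h), hs⟩

/-- splitting off the largest coloured part -/
lemma primcG_split {k : ℕ} {x : PrimcColor} {k' : ℕ} {x' : PrimcColor}
    (h : primcRank k' x' + 1 = primcRank k x) :
    primcG k x = primcG k' x' + primcE k x := by
  rw [primcG_eq, primcG_eq, primcE_eq]
  apply mySeries_split
  · intro l hl
    constructor
    · intro hb
      cases hhead : l.head? with
      | none => 
        left
        intro p hp
        cases l with
        | nil => simp at hp
        | cons h0 t => simp at hhead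
      | some h0 =>
        by_cases he : h0 = (k, x)
        · right; exact congrArg some he
        · left
          intro p hp
          have h1 : primcRank h0.1 h0.2 ≤ primcRank k x := hb h0 (List.mem_of_mem_head? hhead)
          have h2 : primcRank h0.1 h0.2 ≠ primcRank k x := by
            intro heq
            obtain ⟨e1, e2⟩ := primcRank_inj heq
            exact he (Prod.ext e1 e2)
          have := head_bound hl hhead p hp
          omega
    · rintro (hb | hh)
      · intro p hp; have := hb p hp; omega
      · intro p hp
        have := head_bound hl hh p hp
        exact this
  · intro l hl h1 h2
    have : primcRank k x ≤ primcRank k' x' := h1 (k, x) (List.mem_of_mem_head? h2)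
    omega

end PrimcAux

namespace PrimcAux
open PrimcColor PowerSeries

noncomputable def colVar : PrimcColor → PrimcRing
  | a => MvPolynomial.X 0
  | b => 1
  | c => MvPolynomial.X 1
  | d => MvPolynomial.X 2

lemma wt_cons (k : ℕ) (x : PrimcColor) (m : List (ℕ × PrimcColor)) :
    wt ((k, x) :: m) = colVar x * wt m := by
  cases x <;> simp [wt, colVar, List.countP_cons, pow_succ] <;> ring

/-- the head-attachability series -/
noncomputable def primcH (k : ℕ) (x : PrimcColor) : PowerSeries PrimcRing :=
  mySeries (fun l => ∀ p ∈ l.head?, p.1 + matB x p.2 ≤ k)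

lemma primcE_prepend (k : ℕ) (x : PrimcColor) (hk : 0 < k) :
    primcE k x = PowerSeries.C (R := PrimcRing) (colVar x) * X ^ k * primcH k x := by
  refine PowerSeries.ext fun n => ?_
  rw [primcE_eq, mul_assoc, coeff_C_mul, coeff_X_pow_mul', coeff_mySeries]
  by_cases hkn : k ≤ n
  · rw [if_pos hkn, primcH, coeff_mySeries, Finset.mul_sum]
    refine Finset.sum_nbij' (fun l => l.tail) (fun m => (k, x) :: m) ?_ ?_ ?_ ?_ ?_
    · intro l hl
      rw [Set.Finite.mem_toFinset] at hl ⊢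
      obtain ⟨⟨hpos, hch⟩, hh, hs⟩ := hl
      cases l with
      | nil => simp at hh
      | cons h0 t =>
        simp only [List.head?_cons, Option.some.injEq] at hh
        subst hh
        refine ⟨⟨fun p hp => hpos p (List.mem_cons_of_mem _ hp), hch.tail⟩, ?_, ?_⟩
        · exact (List.isChain_cons.mp hch).1
        · simp only [List.map_cons, List.sum_cons] at hs
          simp only [List.tail_cons]
          omega
    · intro m hm
      rw [Set.Finite.mem_toFinset] at hm ⊢
      obtain ⟨⟨hpos, hch⟩, hatt, hs⟩ := hm
      refine ⟨⟨?_, ?_⟩, rfl, ?_⟩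
      · intro p hp
        rcases List.mem_cons.mp hp with rfl | hp
        · exact hk
        · exact hpos p hp
      · exact List.isChain_cons.mpr ⟨hatt, hch⟩
      · simp only [List.map_cons, List.sum_cons, hs]
        omega
    · intro l hl
      rw [Set.Finite.mem_toFinset] at hl
      obtain ⟨-, hh, -⟩ := hl
      cases l with
      | nil => simp at hh
      | cons h0 t =>
        simp only [List.head?_cons, Option.some.injEq] at hh
        simp [hh]
    · intro m _; rfl
    · intro l hl
      rw [Set.Finite.mem_toFinset] at hl
      obtain ⟨-, hh, -⟩ := hl
      cases l with
      | nil => simp at hh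
      | cons h0 t =>
        simp only [List.head?_cons, Option.some.injEq] at hh
        subst hh
        simp [wt_cons]
  · rw [if_neg hkn, mul_zero]
    refine Finset.sum_eq_zero fun l hl => absurd ?_ hkn
    rw [Set.Finite.mem_toFinset] at hl
    obtain ⟨hP, hh, hs⟩ := hl
    have : (k, x) ∈ l := List.mem_of_mem_head? hh
    have := mem_le_sum this
    omega

end PrimcAux

namespace PrimcAux
open PrimcColor PowerSeries

lemma bound_iff_headbound {l : List (ℕ × PrimcColor)} (hl : IsPrimcPartition l)
    (k : ℕ) (x : PrimcColor) :
    (∀ p ∈ l, primcRank p.1 p.2 ≤ primcRank k x) ↔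
      (∀ p ∈ l.head?, primcRank p.1 p.2 ≤ primcRank k x) := by
  constructor
  · intro h p hp
    exact h p (List.mem_of_mem_head? hp)
  · intro h p hp
    cases l with
    | nil => simp at hp
    | cons h0 t =>
      exact le_trans (head_bound hl (l := h0 :: t) rfl p hp) (h h0 rfl)

lemma matB_c_eq_d (y : PrimcColor) : matB c y = matB d y := by cases y <;> rfl

lemma primcH_c_eq_d (k : ℕ) : primcH k c = primcH k d := by
  unfold primcH
  congr 1
  funext l
  simp only [matB_c_eq_d]

/-- H for colour b -/
lemma primcH_b (k : ℕ) (hk : 1 ≤ k) :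
    primcH k b = primcG (k-1) d + primcE k b := by
  rw [primcH, primcG_eq, primcE_eq]
  apply mySeries_split
  · intro l hl
    rw [bound_iff_headbound hl]
    cases hh : l.head? with
    | none => simp
    | some p =>
      obtain ⟨v, y⟩ := p
      simp only [Option.mem_def, Option.some.injEq, forall_eq', Option.some.injEq]
      constructor
      · intro h
        by_cases he : (v, y) = (k, b)
        · right; exact he
        · left
          cases y <;> simp_all [matB, primcRank, Prod.ext_iff] <;> omega
      · rintro (h | h)
        · cases y <;> simp_all [matB, primcRank] <;> omega
        · simp only [Prod.mk.injEq] at h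
          obtain ⟨rfl, rfl⟩ := h
          simp [matB]
  · intro l hl h1 h2
    have := h1 (k, b) (List.mem_of_mem_head? h2)
    simp only [primcRank] at this
    omega

/-- H for colour a -/
lemma primcH_a (k : ℕ) (hk : 2 ≤ k) :
    primcH k a = primcG (k-2) d + primcE (k-1) b := by
  rw [primcH, primcG_eq, primcE_eq]
  apply mySeries_split
  · intro l hl
    rw [bound_iff_headbound hl]
    cases hh : l.head? with
    | none => simp
    | some p =>
      obtain ⟨v, y⟩ := p
      simp only [Option.mem_def, Option.some.injEq, forall_eq', Option.some.injEq]
      constructor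
      · intro h
        by_cases he : (v, y) = (k-1, b)
        · right; exact he
        · left
          cases y <;> simp_all [matB, primcRank, Prod.ext_iff] <;> omega
      · rintro (h | h)
        · cases y <;> simp_all [matB, primcRank] <;> omega
        · simp only [Prod.mk.injEq] at h
          obtain ⟨rfl, rfl⟩ := h
          simp only [matB]
          omega
  · intro l hl h1 h2
    have := h1 (k-1, b) (List.mem_of_mem_head? h2)
    simp only [primcRank] at this
    omega

/-- G(k,c) decomposition via H for colour d -/
lemma primcG_c_decomp (k : ℕ) (hk : 1 ≤ k) :
    primcG k c = primcH k d + primcE k b + primcE (k-1) d := by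
  rw [primcG_eq, primcH, primcE_eq, primcE_eq, add_assoc]
  rw [show (mySeries fun l => ∀ p ∈ l.head?, p.1 + matB d p.2 ≤ k) +
      ((mySeries fun l => l.head? = some (k, b)) + mySeries fun l => l.head? = some (k-1, d)) =
      (mySeries fun l => (∀ p ∈ l.head?, p.1 + matB d p.2 ≤ k) ∨ l.head? = some (k, b)) +
      mySeries fun l => l.head? = some (k-1, d) from ?_]
  · apply mySeries_split
    · intro l hl
      rw [bound_iff_headbound hl]
      cases hh : l.head? with
      | none => simp
      | some p =>
        obtain ⟨v, y⟩ := p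
        simp only [Option.mem_def, Option.some.injEq, forall_eq', Option.some.injEq]
        constructor
        · intro h
          by_cases he1 : (v, y) = (k, b)
          · left; right; exact he1
          · by_cases he2 : (v, y) = (k-1, d)
            · right; exact he2
            · left; left
              cases y <;> simp_all [matB, primcRank, Prod.ext_iff] <;> omega
        · rintro ((h | h) | h)
          · cases y <;> simp_all [matB, primcRank] <;> omega
          · simp only [Prod.mk.injEq] at h
            obtain ⟨rfl, rfl⟩ := h
            simp [primcRank]
          · simp only [Prod.mk.injEq] at h
            obtain ⟨rfl, rfl⟩ := h
            simp only [primcRank]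
            omega
    · rintro l hl (h1 | h1) h2
      · have := h1 (k-1, d) h2
        simp only [matB] at this
        omega
      · rw [h1] at h2
        simp only [Option.some.injEq, Prod.mk.injEq] at h2
        omega
  · rw [← add_assoc]
    congr 1
    refine (mySeries_split ?_ ?_).symm
    · intro l hl; rfl
    · intro l hl h1 h2
      have := h1 (k, b) h2
      simp only [matB] at this
      omega

end PrimcAux

namespace PrimcAux
open PrimcColor PowerSeries

lemma one_sub_X_pow_mul_invOfUnit (j : ℕ) (hj : 0 < j) :
    (1 - (X : PowerSeries PrimcRing) ^ j) *
      PowerSeries.invOfUnit (1 - (X : PowerSeries PrimcRing) ^ j) 1 = 1 :=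
  PowerSeries.mul_invOfUnit _ 1 (by
    rw [map_sub, map_one, map_pow, PowerSeries.constantCoeff_X, zero_pow hj.ne',
      sub_zero, Units.val_one])

lemma split_d (j : ℕ) : primcG j d = primcG j c + primcE j d :=
  primcG_split (by simp [primcRank])

lemma split_c (j : ℕ) : primcG j c = primcG j b + primcE j c :=
  primcG_split (by simp [primcRank])

lemma split_b (j : ℕ) : primcG j b = primcG j a + primcE j b :=
  primcG_split (by simp [primcRank])

lemma split_a (j : ℕ) : primcG (j+1) a = primcG j d + primcE (j+1) a :=
  primcG_split (by simp [primcRank]; omega)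

lemma Eb_rec (j : ℕ) :
    primcE (j+1) b = X ^ (j+1) * (primcG j d + primcE (j+1) b) := by
  have h := primcE_prepend (j+1) b (Nat.succ_pos j)
  rw [primcH_b (j+1) (by omega)] at h
  simpa [colVar] using h

lemma Ed_rec (j : ℕ) :
    primcE (j+1) d = PowerSeries.C (R := PrimcRing) (MvPolynomial.X 2) * X ^ (j+1) * primcH (j+1) d := by
  simpa [colVar] using primcE_prepend (j+1) d (Nat.succ_pos j)

lemma Ec_rec (j : ℕ) :
    primcE (j+1) c = PowerSeries.C (R := PrimcRing) (MvPolynomial.X 1) * X ^ (j+1) * primcH (j+1) d := by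
  have h := primcE_prepend (j+1) c (Nat.succ_pos j)
  rw [primcH_c_eq_d] at h
  simpa [colVar] using h

lemma Gc_decomp (j : ℕ) :
    primcG (j+1) c = primcH (j+1) d + primcE (j+1) b + primcE j d := by
  simpa using primcG_c_decomp (j+1) (by omega)

lemma Ea_rec (j : ℕ) :
    primcE (j+2) a = PowerSeries.C (R := PrimcRing) (MvPolynomial.X 0) * X ^ (j+2) *
      (primcG j d + primcE (j+1) b) := by
  have h := primcE_prepend (j+2) a (by omega)
  rw [primcH_a (j+2) (by omega)] at h
  simpa [colVar] using h

end PrimcAux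


open PrimcAux

open PowerSeries in
/-- The q-difference equation satisfied by the G_{k_d}, for k ≥ 3:
(1 − c q^k) G_{k_d} = ((1 − c q^{2k})/(1 − q^k)) G_{(k−1)_d}
+ ((a q^k + d q^k + a d q^{2k})/(1 − q^{k−1})) G_{(k−2)_d}
+ (a d q^{2k−1}/(1 − q^{k−2})) G_{(k−3)_d},
where 1/(1 − q^j) denotes the inverse of 1 − q^j in the formal power series ring. -/
theorem primcG_qdiff (k : ℕ) (hk : 3 ≤ k) :
    (1 - C (R := PrimcRing) (MvPolynomial.X 1) * (X : PowerSeries PrimcRing) ^ k) * primcG k d =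
      (1 - C (R := PrimcRing) (MvPolynomial.X 1) * X ^ (2 * k)) *
          PowerSeries.invOfUnit (1 - (X : PowerSeries PrimcRing) ^ k) 1 *
          primcG (k - 1) d +
        (C (R := PrimcRing) (MvPolynomial.X 0) * X ^ k + C (R := PrimcRing) (MvPolynomial.X 2) * X ^ k +
              C (R := PrimcRing) (MvPolynomial.X 0) * C (R := PrimcRing) (MvPolynomial.X 2) * X ^ (2 * k)) *
          PowerSeries.invOfUnit (1 - (X : PowerSeries PrimcRing) ^ (k - 1)) 1 *
          primcG (k - 2) d +
        C (R := PrimcRing) (MvPolynomial.X 0) * C (R := PrimcRing) (MvPolynomial.X 2) * X ^ (2 * k - 1) *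
          PowerSeries.invOfUnit (1 - (X : PowerSeries PrimcRing) ^ (k - 2)) 1 *
          primcG (k - 3) d := by
  obtain ⟨m, rfl⟩ : ∃ m, k = m + 3 := ⟨k - 3, by omega⟩
  rw [show 2 * (m + 3) - 1 = 2 * m + 5 by omega, show 2 * (m + 3) = 2 * m + 6 by ring,
    show m + 3 - 1 = m + 2 from rfl, show m + 3 - 2 = m + 1 from rfl,
    show m + 3 - 3 = m from rfl]
  have hu1 := one_sub_X_pow_mul_invOfUnit (m+3) (by omega)
  have hu2 := one_sub_X_pow_mul_invOfUnit (m+2) (by omega)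
  have hu3 := one_sub_X_pow_mul_invOfUnit (m+1) (by omega)
  have hsd3 := split_d (m+3)
  have hsc3 := split_c (m+3)
  have hsb3 := split_b (m+3)
  have hsa3 := split_a (m+2)
  have hsd2 := split_d (m+2)
  have hsc2 := split_c (m+2)
  have hsb2 := split_b (m+2)
  have hsa2 := split_a (m+1)
  have hEb3 := Eb_rec (m+2)
  have hEb2 := Eb_rec (m+1)
  have hEb1 := Eb_rec m
  have hEd3 := Ed_rec (m+2)
  have hEd2 := Ed_rec (m+1)
  have hEc3 := Ec_rec (m+2)
  have hEc2 := Ec_rec (m+1)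
  have hGcd3 := Gc_decomp (m+2)
  have hEa3 := Ea_rec (m+1)
  have hEa2 := Ea_rec m
  have heb3 : primcE (m+3) b =
      invOfUnit (1 - (X : PowerSeries PrimcRing) ^ (m+3)) 1 * (X ^ (m+3) * primcG (m+2) d) := by
    linear_combination (invOfUnit (1 - (X : PowerSeries PrimcRing) ^ (m+3)) 1) * hEb3 -
      primcE (m+3) b * hu1
  have heb2 : primcE (m+2) b =
      invOfUnit (1 - (X : PowerSeries PrimcRing) ^ (m+2)) 1 * (X ^ (m+2) * primcG (m+1) d) := by
    linear_combination (invOfUnit (1 - (X : PowerSeries PrimcRing) ^ (m+2)) 1) * hEb2 -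
      primcE (m+2) b * hu2
  have heb1 : primcE (m+1) b =
      invOfUnit (1 - (X : PowerSeries PrimcRing) ^ (m+1)) 1 * (X ^ (m+1) * primcG m d) := by
    linear_combination (invOfUnit (1 - (X : PowerSeries PrimcRing) ^ (m+1)) 1) * hEb1 -
      primcE (m+1) b * hu3
  have hea3 : primcE (m+3) a = C (R := PrimcRing) (MvPolynomial.X 0) * (X ^ (m+3) *
      (invOfUnit (1 - (X : PowerSeries PrimcRing) ^ (m+2)) 1 * primcG (m+1) d)) := by
    linear_combination hEa3 + (C (R := PrimcRing) (MvPolynomial.X 0) * X ^ (m+3)) * heb2 -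
      (C (R := PrimcRing) (MvPolynomial.X 0) * X ^ (m+3) * primcG (m+1) d) * hu2
  have hea2 : primcE (m+2) a = C (R := PrimcRing) (MvPolynomial.X 0) * (X ^ (m+2) *
      (invOfUnit (1 - (X : PowerSeries PrimcRing) ^ (m+1)) 1 * primcG m d)) := by
    linear_combination hEa2 + (C (R := PrimcRing) (MvPolynomial.X 0) * X ^ (m+2)) * heb1 -
      (C (R := PrimcRing) (MvPolynomial.X 0) * X ^ (m+2) * primcG m d) * hu3
  have hW1 : (C (R := PrimcRing) (MvPolynomial.X 1) + C (R := PrimcRing) (MvPolynomial.X 2)) * X ^ (m+3) *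
      primcH (m+3) d =
      primcG (m+3) d - primcG (m+2) d -
      C (R := PrimcRing) (MvPolynomial.X 0) * X ^ (m+3) *
        invOfUnit (1 - (X : PowerSeries PrimcRing) ^ (m+2)) 1 * primcG (m+1) d -
      invOfUnit (1 - (X : PowerSeries PrimcRing) ^ (m+3)) 1 * X ^ (m+3) * primcG (m+2) d := by
    linear_combination (-1 : PowerSeries PrimcRing) * hsd3 - hsc3 - hsb3 - hsa3 - hEc3 - hEd3 -
      hea3 - heb3
  have hW2 : (C (R := PrimcRing) (MvPolynomial.X 1) + C (R := PrimcRing) (MvPolynomial.X 2)) * X ^ (m+2) *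
      primcH (m+2) d =
      primcG (m+2) d - primcG (m+1) d -
      C (R := PrimcRing) (MvPolynomial.X 0) * X ^ (m+2) *
        invOfUnit (1 - (X : PowerSeries PrimcRing) ^ (m+1)) 1 * primcG m d -
      invOfUnit (1 - (X : PowerSeries PrimcRing) ^ (m+2)) 1 * X ^ (m+2) * primcG (m+1) d := by
    linear_combination (-1 : PowerSeries PrimcRing) * hsd2 - hsc2 - hsb2 - hsa2 - hEc2 - hEd2 -
      hea2 - heb2
  have hH3 : primcH (m+3) d + C (R := PrimcRing) (MvPolynomial.X 2) * X ^ (m+3) * primcH (m+3) d =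
      primcG (m+3) d -
      invOfUnit (1 - (X : PowerSeries PrimcRing) ^ (m+3)) 1 * X ^ (m+3) * primcG (m+2) d -
      C (R := PrimcRing) (MvPolynomial.X 2) * X ^ (m+2) * primcH (m+2) d := by
    linear_combination (-1 : PowerSeries PrimcRing) * hsd3 - hGcd3 - heb3 - hEd3 - hEd2
  linear_combination
    (-(1 + C (R := PrimcRing) (MvPolynomial.X 2) * X ^ (m+3))) * hW1 -
    (C (R := PrimcRing) (MvPolynomial.X 2) * X ^ (m+3)) * hW2 +
    ((C (R := PrimcRing) (MvPolynomial.X 1) + C (R := PrimcRing) (MvPolynomial.X 2)) * X ^ (m+3)) * hH3 -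
    primcG (m+2) d * hu1 -
    (C (R := PrimcRing) (MvPolynomial.X 2) * X ^ (m+3) * primcG (m+1) d) * hu2
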